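/- The function f(x,S) = 2|∇^⊥ r|²/r² − 1/2 (defined for x ∈ ℝ³, |x| ≥ 1, and 2-planes S ⊂ ℝ³) extends to a Lipschitz function on the Grassmannian bundle over a neighborhood of ∞ in S³ (with the round metric via stereographic projection) by setting f(∞, S) = −1/2. In particular, |∇₀ f|²_{ds₀²} is bounded: |∇f(·,S₀)|²_{dx²} is asymptotic to 1/r⁶ as r → ∞, so |∇₀f|²_{ds₀²} ∼ (1+r²)²/r⁶ → 0. -/

import Mathlib

open scoped RealInnerProductSpace

/-- Component of `v` orthogonal to the plane `S`. -/
noncomputable def perpPart (S : Submodule ℝ (EuclideanSpace ℝ (Fin 3)))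
    (v : EuclideanSpace ℝ (Fin 3)) : EuclideanSpace ℝ (Fin 3) :=
  v - (S.orthogonalProjectionOnto v : EuclideanSpace ℝ (Fin 3))

/-- Orthogonal projection onto `S` as an endomorphism of `ℝ³`. -/
noncomputable def projCLM (S : Submodule ℝ (EuclideanSpace ℝ (Fin 3))) :
    EuclideanSpace ℝ (Fin 3) →L[ℝ] EuclideanSpace ℝ (Fin 3) :=
  S.subtypeL.comp (S.orthogonalProjectionOnto)

private lemma nsq17 {n : ℕ} (v : EuclideanSpace ℝ (Fin n)) : ‖v‖ ^ 2 = ∑ i, v i ^ 2 := by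
  rw [EuclideanSpace.norm_eq, Real.sq_sqrt (by positivity)]
  simp [sq_abs]

private lemma perp_le17 (S : Submodule ℝ (EuclideanSpace ℝ (Fin 3)))
    (v : EuclideanSpace ℝ (Fin 3)) :
    ‖perpPart S v‖ ≤ ‖v‖ := by
  have h0 : ⟪perpPart S v, (S.orthogonalProjectionOnto v : EuclideanSpace ℝ (Fin 3))⟫ = 0 :=
    by have := S.starProjection_inner_eq_zero v _ (S.orthogonalProjectionOnto v).2; rwa [Submodule.starProjection_apply] at this
  have hsum : perpPart S v + (S.orthogonalProjectionOnto v : EuclideanSpace ℝ (Fin 3)) = v := by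
    simp [perpPart]
  have h := norm_add_sq_real (perpPart S v) ((S.orthogonalProjectionOnto v : EuclideanSpace ℝ (Fin 3)))
  rw [hsum, h0] at h
  nlinarith [norm_nonneg (perpPart S v), norm_nonneg v,
    norm_nonneg ((S.orthogonalProjectionOnto v : EuclideanSpace ℝ (Fin 3)))]

private lemma perp_sub17 (S : Submodule ℝ (EuclideanSpace ℝ (Fin 3)))
    (x y : EuclideanSpace ℝ (Fin 3)) :
    perpPart S x - perpPart S y = perpPart S (x - y) := by
  simp only [perpPart, map_sub, Submodule.coe_sub]
  abel

private lemma perp_smul17 (S : Submodule ℝ (EuclideanSpace ℝ (Fin 3)))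
    (c : ℝ) (x : EuclideanSpace ℝ (Fin 3)) :
    perpPart S (c • x) = c • perpPart S x := by
  simp only [perpPart, map_smul, Submodule.coe_smul, smul_sub]

set_option maxHeartbeats 1000000 in
/-- The key analytic inequality. -/
private lemma key17 (r s A B d : ℝ) (hr : 1 ≤ r) (hs : 1 ≤ s) (hA0 : 0 ≤ A) (hB0 : 0 ≤ B)
    (hA : A ≤ r) (hB : B ≤ s) (hAB : |A - B| ≤ d) (hrs : |r - s| ≤ d) :
    2 * A ^ 2 / r ^ 4 - 2 * B ^ 2 / s ^ 4 ≤ 64 * (d / (r * s)) := by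
  have hr0 : (0:ℝ) < r := lt_of_lt_of_le one_pos hr
  have hs0 : (0:ℝ) < s := lt_of_lt_of_le one_pos hs
  have hd0 : 0 ≤ d := le_trans (abs_nonneg _) hAB
  have e1 : A - B ≤ d := (abs_le.1 hAB).2
  have e3 : s - r ≤ d := by linarith [(abs_le.1 hrs).1]
  rcases le_or_gt s (2 * r) with h | h
  · rw [div_sub_div _ _ (by positivity) (by positivity),
      show (64:ℝ) * (d / (r * s)) = 64 * d / (r * s) by ring,
      div_le_div_iff₀ (by positivity) (by positivity)]
    have h1 : A ^ 2 - B ^ 2 ≤ 3 * d * r := by nlinarith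
    have h2 : B ^ 2 * (s - r) ≤ s ^ 2 * d := by
      nlinarith [mul_nonneg (sq_nonneg B) (show (0:ℝ) ≤ d - (s - r) by linarith),
        mul_nonneg (show (0:ℝ) ≤ s ^ 2 - B ^ 2 by nlinarith) hd0]
    have h3 : B ^ 2 * (s ^ 4 - r ^ 4) ≤ s ^ 2 * d * (s ^ 3 + s ^ 2 * r + s * r ^ 2 + r ^ 3) := by
      nlinarith [mul_le_mul_of_nonneg_right h2
        (show (0:ℝ) ≤ s ^ 3 + s ^ 2 * r + s * r ^ 2 + r ^ 3 by positivity)]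
    have h4 : s ^ 3 + s ^ 2 * r + s * r ^ 2 + r ^ 3 ≤ 15 * r ^ 3 := by
      nlinarith [pow_le_pow_left₀ hs0.le h 3,
        mul_le_mul_of_nonneg_right (pow_le_pow_left₀ hs0.le h 2) hr0.le,
        mul_le_mul_of_nonneg_right h (sq_nonneg r)]
    have k1 : 2 * s ^ 4 * (A ^ 2 - B ^ 2) * (r * s) ≤ 12 * d * r ^ 4 * s ^ 4 := by
      nlinarith [mul_le_mul_of_nonneg_right h1 (show (0:ℝ) ≤ 2 * s ^ 4 * (r * s) by positivity),
        mul_le_mul_of_nonneg_left h (show (0:ℝ) ≤ 6 * d * r ^ 2 * s ^ 4 by positivity),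
        mul_le_mul_of_nonneg_left hr (show (0:ℝ) ≤ 12 * d * r ^ 3 * s ^ 4 by positivity)]
    have k2 : 2 * (B ^ 2 * (s ^ 4 - r ^ 4)) * (r * s) ≤ 30 * d * r ^ 4 * s ^ 4 := by
      have k3 : 2 * (B ^ 2 * (s ^ 4 - r ^ 4)) * (r * s) ≤
          2 * (s ^ 2 * d * (s ^ 3 + s ^ 2 * r + s * r ^ 2 + r ^ 3)) * (r * s) := by
        nlinarith [mul_le_mul_of_nonneg_right h3 (show (0:ℝ) ≤ 2 * (r * s) by positivity)]
      have k4 : 2 * (s ^ 2 * d * (s ^ 3 + s ^ 2 * r + s * r ^ 2 + r ^ 3)) * (r * s) ≤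
          2 * (s ^ 2 * d * (15 * r ^ 3)) * (r * s) := by
        nlinarith [mul_le_mul_of_nonneg_right h4 (show (0:ℝ) ≤ 2 * s ^ 2 * d * (r * s) by positivity)]
      have k5 : 2 * (s ^ 2 * d * (15 * r ^ 3)) * (r * s) ≤ 30 * d * r ^ 4 * s ^ 4 := by
        nlinarith [mul_le_mul_of_nonneg_left hs (show (0:ℝ) ≤ 30 * d * r ^ 4 * s ^ 3 by positivity)]
      linarith
    nlinarith [k1, k2, mul_nonneg hd0 (show (0:ℝ) ≤ r ^ 4 * s ^ 4 by positivity)]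
  · have hdge : s / 2 ≤ d := by linarith
    have l1 : 2 * A ^ 2 / r ^ 4 ≤ 2 / r := by
      rw [div_le_div_iff₀ (by positivity) hr0]
      have hA2 : A ^ 2 ≤ r ^ 2 := by nlinarith
      nlinarith [mul_le_mul_of_nonneg_right hA2 hr0.le,
        mul_le_mul_of_nonneg_left hr (show (0:ℝ) ≤ 2 * r ^ 3 by positivity)]
    have l2 : 2 / r ≤ 64 * (d / (r * s)) := by
      rw [show (64:ℝ) * (d / (r * s)) = 64 * d / (r * s) by ring,
        div_le_div_iff₀ hr0 (by positivity)]
      nlinarith [mul_le_mul_of_nonneg_left hdge (show (0:ℝ) ≤ 64 * r by positivity),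
        mul_nonneg hr0.le hs0.le]
    have l3 : (0:ℝ) ≤ 2 * B ^ 2 / s ^ 4 := by positivity
    linarith

section Sigma
variable (σ : EuclideanSpace ℝ (Fin 3) → EuclideanSpace ℝ (Fin 4))
    (hσ : ∀ x, σ x = (WithLp.equiv 2 (Fin 4 → ℝ)).symm
      ![2 * x 0 / (1 + ‖x‖ ^ 2), 2 * x 1 / (1 + ‖x‖ ^ 2), 2 * x 2 / (1 + ‖x‖ ^ 2),
        (‖x‖ ^ 2 - 1) / (‖x‖ ^ 2 + 1)])

include hσ

private lemma sig_norm17 (x : EuclideanSpace ℝ (Fin 3)) : ‖σ x‖ ^ 2 = 1 := by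
  have hu : ‖x‖ ^ 2 = x 0 ^ 2 + x 1 ^ 2 + x 2 ^ 2 := by rw [nsq17]; simp [Fin.sum_univ_three]
  have hA : (1:ℝ) + ‖x‖ ^ 2 ≠ 0 := by positivity
  have hA' : ‖x‖ ^ 2 + (1:ℝ) ≠ 0 := by positivity
  rw [nsq17, hσ]
  simp only [WithLp.equiv_symm_apply, PiLp.toLp_apply, Fin.sum_univ_four, Matrix.cons_val_zero,
    Matrix.cons_val_one, Matrix.head_cons, Matrix.cons_val_two, Matrix.tail_cons,
    Matrix.cons_val_three]
  field_simp
  linear_combination (-(4:ℝ) * (1 + ‖x‖ ^ 2) ^ 2) * hu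

private lemma sig_inner17 (x y : EuclideanSpace ℝ (Fin 3)) :
    ⟪σ x, σ y⟫ * ((1 + ‖x‖ ^ 2) * (1 + ‖y‖ ^ 2)) =
      4 * ⟪x, y⟫ + (‖x‖ ^ 2 - 1) * (‖y‖ ^ 2 - 1) := by
  have hp : ⟪x, y⟫ = x 0 * y 0 + x 1 * y 1 + x 2 * y 2 := by
    simp [PiLp.inner_apply, Fin.sum_univ_three, RCLike.inner_apply, mul_comm]
  have hA : (1:ℝ) + ‖x‖ ^ 2 ≠ 0 := by positivity
  have hB : (1:ℝ) + ‖y‖ ^ 2 ≠ 0 := by positivity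
  have hA' : ‖x‖ ^ 2 + (1:ℝ) ≠ 0 := by positivity
  have hB' : ‖y‖ ^ 2 + (1:ℝ) ≠ 0 := by positivity
  rw [hσ x, hσ y, hp]
  simp only [PiLp.inner_apply, RCLike.inner_apply, WithLp.equiv_symm_apply, PiLp.toLp_apply,
    Fin.sum_univ_four, Matrix.cons_val_zero, Matrix.cons_val_one, Matrix.head_cons,
    Matrix.cons_val_two, Matrix.tail_cons, Matrix.cons_val_three, conj_trivial]
  field_simp
  ring

private lemma sig_dist17 (x y : EuclideanSpace ℝ (Fin 3)) :
    ‖σ x - σ y‖ ^ 2 * ((1 + ‖x‖ ^ 2) * (1 + ‖y‖ ^ 2)) = 4 * ‖x - y‖ ^ 2 := by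
  have h1 := sig_norm17 σ hσ x
  have h2 := sig_norm17 σ hσ y
  have h3 := sig_inner17 σ hσ x y
  rw [norm_sub_sq_real, norm_sub_sq_real, h1, h2]
  linear_combination (-2 : ℝ) * h3

private lemma sig_low17 (x y : EuclideanSpace ℝ (Fin 3)) (hx : 1 ≤ ‖x‖) (hy : 1 ≤ ‖y‖) :
    ‖x - y‖ / (‖x‖ * ‖y‖) ≤ ‖σ x - σ y‖ := by
  have hx0 : (0:ℝ) < ‖x‖ := lt_of_lt_of_le one_pos hx
  have hy0 : (0:ℝ) < ‖y‖ := lt_of_lt_of_le one_pos hy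
  have hd := sig_dist17 σ hσ x y
  have hsq : (‖x - y‖ / (‖x‖ * ‖y‖)) ^ 2 ≤ ‖σ x - σ y‖ ^ 2 := by
    have hAB : (0:ℝ) < (1 + ‖x‖ ^ 2) * (1 + ‖y‖ ^ 2) := by positivity
    rw [div_pow, div_le_iff₀ (by positivity)]
    have h4 : ‖σ x - σ y‖ ^ 2 = 4 * ‖x - y‖ ^ 2 / ((1 + ‖x‖ ^ 2) * (1 + ‖y‖ ^ 2)) := by
      field_simp
      linarith [hd]
    rw [h4, div_mul_eq_mul_div, le_div_iff₀ hAB]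
    have h5 : 1 ≤ ‖x‖ ^ 2 := by nlinarith
    have h6 : 1 ≤ ‖y‖ ^ 2 := by nlinarith
    have h7 : 1 ≤ ‖x‖ ^ 2 * ‖y‖ ^ 2 := by nlinarith
    nlinarith [sq_nonneg ‖x - y‖,
      mul_nonneg (mul_nonneg (sq_nonneg ‖x - y‖) (sub_nonneg.2 h5)) (sub_nonneg.2 h6),
      mul_nonneg (sq_nonneg ‖x - y‖) (sub_nonneg.2 h7)]
  have := Real.sqrt_le_sqrt hsq
  rwa [Real.sqrt_sq (by positivity), Real.sqrt_sq (norm_nonneg _)] at this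

private lemma sigN17 (N : EuclideanSpace ℝ (Fin 4))
    (hN : N = (WithLp.equiv 2 (Fin 4 → ℝ)).symm ![0, 0, 0, 1])
    (x : EuclideanSpace ℝ (Fin 3)) (hx : 1 ≤ ‖x‖) : 1 / ‖x‖ ≤ ‖σ x - N‖ := by
  have hx0 : (0:ℝ) < ‖x‖ := lt_of_lt_of_le one_pos hx
  have hA' : ‖x‖ ^ 2 + (1:ℝ) ≠ 0 := by positivity
  have hNn : ‖N‖ ^ 2 = 1 := by
    rw [nsq17, hN]
    simp [Fin.sum_univ_four]
  have hinn : ⟪σ x, N⟫ = (‖x‖ ^ 2 - 1) / (‖x‖ ^ 2 + 1) := by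
    rw [hσ x, hN]
    simp [PiLp.inner_apply, RCLike.inner_apply, Fin.sum_univ_four]
  have hdist : ‖σ x - N‖ ^ 2 * (‖x‖ ^ 2 + 1) = 4 := by
    rw [norm_sub_sq_real, sig_norm17 σ hσ x, hNn, hinn]
    field_simp
    ring
  have hsq : (1 / ‖x‖) ^ 2 ≤ ‖σ x - N‖ ^ 2 := by
    have h5 : 1 ≤ ‖x‖ ^ 2 := by nlinarith
    have h6 : ‖σ x - N‖ ^ 2 = 4 / (‖x‖ ^ 2 + 1) := by
      field_simp
      linarith [hdist]
    rw [h6, div_pow, one_pow, div_le_div_iff₀ (by positivity) (by positivity)]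
    nlinarith
  have := Real.sqrt_le_sqrt hsq
  rwa [Real.sqrt_sq (by positivity), Real.sqrt_sq (norm_nonneg _)] at this

end Sigma

set_option maxHeartbeats 1000000 in
/-- The function `f(x,S) = 2|∇^⊥ r|²/r² − 1/2`, defined for `|x| ≥ 1` and 2-planes
`S ⊂ ℝ³`, extends to a Lipschitz function on the Grassmannian bundle over a neighborhood
of `∞` in `S³` (round metric, realized via the stereographic embedding `σ : ℝ³ → ℝ⁴`,
with north pole `N`) by setting `f(∞, S) = −1/2`: there is `C > 0` with
`|f(x,S) + 1/2| ≤ C‖σ(x) − N‖`, `|f(x,S) − f(y,S)| ≤ C‖σ(x) − σ(y)‖`, and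
`|f(x,S) − f(x,S')| ≤ C‖P_S − P_{S'}‖` on `{|x| ≥ 1}`. -/
theorem stmt17
    (σ : EuclideanSpace ℝ (Fin 3) → EuclideanSpace ℝ (Fin 4))
    (hσ : ∀ x, σ x = (WithLp.equiv 2 (Fin 4 → ℝ)).symm
      ![2 * x 0 / (1 + ‖x‖ ^ 2), 2 * x 1 / (1 + ‖x‖ ^ 2), 2 * x 2 / (1 + ‖x‖ ^ 2),
        (‖x‖ ^ 2 - 1) / (‖x‖ ^ 2 + 1)])
    (N : EuclideanSpace ℝ (Fin 4))
    (hN : N = (WithLp.equiv 2 (Fin 4 → ℝ)).symm ![0, 0, 0, 1])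
    (f : EuclideanSpace ℝ (Fin 3) →
      {S : Submodule ℝ (EuclideanSpace ℝ (Fin 3)) // Module.finrank ℝ S = 2} → ℝ)
    (hf : ∀ x S, f x S = 2 * ‖perpPart S.1 (‖x‖⁻¹ • x)‖ ^ 2 / ‖x‖ ^ 2 - 1 / 2) :
    ∃ C : ℝ, 0 < C ∧
      ∀ S S' : {S : Submodule ℝ (EuclideanSpace ℝ (Fin 3)) // Module.finrank ℝ S = 2},
        (∀ x, 1 ≤ ‖x‖ → |f x S - (-(1 : ℝ) / 2)| ≤ C * ‖σ x - N‖) ∧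
        (∀ x y, 1 ≤ ‖x‖ → 1 ≤ ‖y‖ → |f x S - f y S| ≤ C * ‖σ x - σ y‖) ∧
        (∀ x, 1 ≤ ‖x‖ → |f x S - f x S'| ≤ C * ‖projCLM S.1 - projCLM S'.1‖) := by
  -- rewrite f in terms of ‖perpPart S x‖
  have hf4 : ∀ (x : EuclideanSpace ℝ (Fin 3)) S, 1 ≤ ‖x‖ →
      f x S = 2 * ‖perpPart S.1 x‖ ^ 2 / ‖x‖ ^ 4 - 1 / 2 := by
    intro x S hx
    have hx0 : (0:ℝ) < ‖x‖ := lt_of_lt_of_le one_pos hx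
    rw [hf, perp_smul17, norm_smul]
    have : ‖(‖x‖⁻¹ : ℝ)‖ = ‖x‖⁻¹ := by
      rw [Real.norm_eq_abs, abs_of_pos (by positivity)]
    rw [this]
    field_simp
  have hunit : ∀ (x : EuclideanSpace ℝ (Fin 3)), 1 ≤ ‖x‖ → ‖(‖x‖⁻¹ • x : EuclideanSpace ℝ (Fin 3))‖ = 1 := by
    intro x hx
    have hx0 : (0:ℝ) < ‖x‖ := lt_of_lt_of_le one_pos hx
    rw [norm_smul, Real.norm_eq_abs, abs_of_pos (by positivity), inv_mul_cancel₀ hx0.ne']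
  refine ⟨64, by norm_num, fun S S' => ⟨?_, ?_, ?_⟩⟩
  · -- bound near infinity
    intro x hx
    have hx0 : (0:ℝ) < ‖x‖ := lt_of_lt_of_le one_pos hx
    set a := ‖perpPart S.1 (‖x‖⁻¹ • x)‖ with ha
    have ha1 : a ≤ 1 := by
      rw [ha, ← hunit x hx]
      exact perp_le17 _ _
    have ha0 : 0 ≤ a := norm_nonneg _
    have hval : f x S - (-(1:ℝ) / 2) = 2 * a ^ 2 / ‖x‖ ^ 2 := by rw [hf]; ring
    rw [hval, abs_of_nonneg (by positivity)]
    have h1 : 2 * a ^ 2 / ‖x‖ ^ 2 ≤ 2 / ‖x‖ :=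
      div_le_div₀ (by norm_num) (by nlinarith) hx0 (by nlinarith)
    have h2 : 1 / ‖x‖ ≤ ‖σ x - N‖ := sigN17 σ hσ N hN x hx
    have h3 : (2:ℝ) / ‖x‖ = 2 * (1 / ‖x‖) := by ring
    nlinarith [norm_nonneg (σ x - N)]
  · -- Lipschitz in x
    intro x y hx hy
    have hx0 : (0:ℝ) < ‖x‖ := lt_of_lt_of_le one_pos hx
    have hy0 : (0:ℝ) < ‖y‖ := lt_of_lt_of_le one_pos hy
    set A := ‖perpPart S.1 x‖ with hA
    set B := ‖perpPart S.1 y‖ with hB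
    have hAr : A ≤ ‖x‖ := perp_le17 _ _
    have hBs : B ≤ ‖y‖ := perp_le17 _ _
    have hABd : |A - B| ≤ ‖x - y‖ := by
      calc |A - B| ≤ ‖perpPart S.1 x - perpPart S.1 y‖ := abs_norm_sub_norm_le _ _
        _ = ‖perpPart S.1 (x - y)‖ := by rw [perp_sub17]
        _ ≤ ‖x - y‖ := perp_le17 _ _
    have hrsd : |‖x‖ - ‖y‖| ≤ ‖x - y‖ := abs_norm_sub_norm_le _ _
    have k1 := key17 ‖x‖ ‖y‖ A B ‖x - y‖ hx hy (norm_nonneg _) (norm_nonneg _)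
      hAr hBs hABd hrsd
    have k2 := key17 ‖y‖ ‖x‖ B A ‖x - y‖ hy hx (norm_nonneg _) (norm_nonneg _)
      hBs hAr (by rwa [abs_sub_comm]) (by rwa [abs_sub_comm])
    have hval : f x S - f y S = 2 * A ^ 2 / ‖x‖ ^ 4 - 2 * B ^ 2 / ‖y‖ ^ 4 := by
      rw [hf4 x S hx, hf4 y S hy]; ring
    have habs : |f x S - f y S| ≤ 64 * (‖x - y‖ / (‖x‖ * ‖y‖)) := by
      rw [hval, abs_le]
      constructor
      · have : ‖y‖ * ‖x‖ = ‖x‖ * ‖y‖ := by ring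
        rw [this] at k2
        linarith
      · exact k1
    have hlow := sig_low17 σ hσ x y hx hy
    calc |f x S - f y S| ≤ 64 * (‖x - y‖ / (‖x‖ * ‖y‖)) := habs
      _ ≤ 64 * ‖σ x - σ y‖ := by linarith
  · -- Lipschitz in S
    intro x hx
    have hx0 : (0:ℝ) < ‖x‖ := lt_of_lt_of_le one_pos hx
    set u : EuclideanSpace ℝ (Fin 3) := ‖x‖⁻¹ • x with hu
    have hu1 : ‖u‖ = 1 := hunit x hx
    set a := ‖perpPart S.1 u‖ with ha
    set b := ‖perpPart S'.1 u‖ with hb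
    have ha1 : a ≤ 1 := by rw [ha, ← hu1]; exact perp_le17 _ _
    have hb1 : b ≤ 1 := by rw [hb, ← hu1]; exact perp_le17 _ _
    have ha0 : 0 ≤ a := norm_nonneg _
    have hb0 : 0 ≤ b := norm_nonneg _
    set D := ‖projCLM S.1 - projCLM S'.1‖ with hD
    have hD0 : 0 ≤ D := norm_nonneg _
    have hdiff : perpPart S.1 u - perpPart S'.1 u = (projCLM S'.1 - projCLM S.1) u := by
      simp only [perpPart, projCLM, ContinuousLinearMap.sub_apply,
        ContinuousLinearMap.comp_apply, Submodule.subtypeL_apply]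
      abel
    have hab : |a - b| ≤ D := by
      calc |a - b| ≤ ‖perpPart S.1 u - perpPart S'.1 u‖ := abs_norm_sub_norm_le _ _
        _ = ‖(projCLM S'.1 - projCLM S.1) u‖ := by rw [hdiff]
        _ ≤ ‖projCLM S'.1 - projCLM S.1‖ * ‖u‖ := ContinuousLinearMap.le_opNorm _ _
        _ = D := by rw [hu1, mul_one, hD, norm_sub_rev]
    have hval : f x S - f x S' = (2 * a ^ 2 - 2 * b ^ 2) / ‖x‖ ^ 2 := by
      rw [hf, hf]; ring
    have e1 := (abs_le.1 hab).1
    have e2 := (abs_le.1 hab).2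
    have h1 : |2 * a ^ 2 - 2 * b ^ 2| ≤ 4 * D := by
      rw [abs_le]
      constructor <;> nlinarith [mul_le_mul_of_nonneg_right e2 (show (0:ℝ) ≤ a + b by linarith),
        mul_le_mul_of_nonneg_right e1 (show (0:ℝ) ≤ a + b by linarith)]
    have hxsq : (1:ℝ) ≤ ‖x‖ ^ 2 := by nlinarith
    calc |f x S - f x S'| = |2 * a ^ 2 - 2 * b ^ 2| / ‖x‖ ^ 2 := by
          rw [hval, abs_div, abs_of_pos (by positivity : (0:ℝ) < ‖x‖ ^ 2)]
      _ ≤ |2 * a ^ 2 - 2 * b ^ 2| := div_le_self (abs_nonneg _) hxsq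
      _ ≤ 4 * D := h1
      _ ≤ 64 * D := by linarith
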